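/- For g = 2, the ring Q[α,β,γ]/(α² + β − 8, (β + 8)α + γ, αγ) is a finite-dimensional Q-vector space of dimension 4, with basis {1, α, β, γ} (equivalently {1, α, α², α³} since β = 8 − α² and γ = −(β+8)α = (α² − 16)α modulo the ideal). -/

import Mathlib

open MvPolynomial

/-- The genus-2 quantum relation ideal `(α² + β − 8, (β + 8)α + γ, αγ)` in `ℚ[α,β,γ]`
(`α = X 0`, `β = X 1`, `γ = X 2`). -/
noncomputable def genus2Ideal : Ideal (MvPolynomial (Fin 3) ℚ) :=
  Ideal.span {X 0 ^ 2 + X 1 - C 8, (X 1 + C 8) * X 0 + X 2, X 0 * X 2}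


noncomputable def g2f : Polynomial ℚ := Polynomial.X ^ 4 - Polynomial.C 16 * Polynomial.X ^ 2

lemma g2f_monic : g2f.Monic := by
  unfold g2f; monicity!

lemma g2f_natDegree : g2f.natDegree = 4 := by
  unfold g2f; compute_degree!

lemma mem1 : X 0 ^ 2 + X 1 - C 8 ∈ genus2Ideal :=
  Ideal.subset_span (by simp)
lemma mem2 : (X 1 + C 8) * X 0 + X 2 ∈ genus2Ideal :=
  Ideal.subset_span (by simp)
lemma mem3 : X 0 * X 2 ∈ genus2Ideal :=
  Ideal.subset_span (by simp)

lemma mem_quartic : (X 0 ^ 4 - C 16 * X 0 ^ 2 : MvPolynomial (Fin 3) ℚ) ∈ genus2Ideal := by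
  have h : (X 0 ^ 4 - C 16 * X 0 ^ 2 : MvPolynomial (Fin 3) ℚ) =
      X 0 ^ 2 * (X 0 ^ 2 + X 1 - C 8) - X 0 * ((X 1 + C 8) * X 0 + X 2) + X 0 * X 2 := by
    simp only [map_ofNat]; ring
  rw [h]
  exact Ideal.add_mem _ (Ideal.sub_mem _ (Ideal.mul_mem_left _ _ mem1)
    (Ideal.mul_mem_left _ _ mem2)) mem3

noncomputable def g2R := AdjoinRoot g2f

noncomputable def g2root : AdjoinRoot g2f := AdjoinRoot.root g2f

lemma g2root_pow : g2root ^ 4 - 16 * g2root ^ 2 = 0 := by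
  have := AdjoinRoot.eval₂_root g2f
  unfold g2f at this
  simp [sub_eq_zero, map_ofNat] at this
  exact sub_eq_zero.2 this

noncomputable def φ0 : MvPolynomial (Fin 3) ℚ →ₐ[ℚ] AdjoinRoot g2f :=
  aeval ![g2root, 8 - g2root ^ 2, g2root ^ 3 - 16 * g2root]

lemma φ0_vanish : ∀ a ∈ genus2Ideal, φ0 a = 0 := by
  intro a ha
  unfold genus2Ideal at ha
  refine Submodule.span_induction ?_ ?_ ?_ ?_ ha
  · rintro x hx
    simp only [Set.mem_insert_iff, Set.mem_singleton_iff] at hx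
    have h4 := g2root_pow
    rcases hx with rfl | rfl | rfl
    · simp [φ0, map_ofNat]
    · simp [φ0, map_ofNat]; ring
    · simp [φ0, map_ofNat]; linear_combination h4
  · simp
  · intro x y _ _ hx hy; simp [map_add, hx, hy]
  · intro c x _ hx; simp [hx]

noncomputable def φ : (MvPolynomial (Fin 3) ℚ ⧸ genus2Ideal) →ₐ[ℚ] AdjoinRoot g2f :=
  Ideal.Quotient.liftₐ genus2Ideal φ0 φ0_vanish

lemma aeval_mkX0 : Polynomial.aeval (Ideal.Quotient.mk genus2Ideal (X 0)) g2f = 0 := by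
  unfold g2f
  have : (Ideal.Quotient.mk genus2Ideal) (X 0 ^ 4 - C 16 * X 0 ^ 2) = 0 :=
    (Ideal.Quotient.eq_zero_iff_mem).2 mem_quartic
  simp only [map_sub, map_mul, map_pow, Polynomial.map_sub, Polynomial.aeval_X,
    map_mul, map_pow, Polynomial.aeval_C] at *
  convert this using 2
  simp [map_ofNat]

noncomputable def ψ : AdjoinRoot g2f →ₐ[ℚ] (MvPolynomial (Fin 3) ℚ ⧸ genus2Ideal) :=
  AdjoinRoot.liftAlgHom g2f (Algebra.ofId ℚ _) (Ideal.Quotient.mk genus2Ideal (X 0)) aeval_mkX0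

lemma ψ_root : AdjoinRoot.liftAlgHom g2f (Algebra.ofId ℚ _) (Ideal.Quotient.mk genus2Ideal (X 0))
    aeval_mkX0 (AdjoinRoot.root g2f) = Ideal.Quotient.mk genus2Ideal (X 0) :=
  AdjoinRoot.liftAlgHom_root _ _ _ _

lemma ψ_mkX : AdjoinRoot.liftAlgHom g2f (Algebra.ofId ℚ _) (Ideal.Quotient.mk genus2Ideal (X 0))
    aeval_mkX0 (AdjoinRoot.mk g2f Polynomial.X) = Ideal.Quotient.mk genus2Ideal (X 0) :=
  AdjoinRoot.liftAlgHom_root _ _ _ _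

lemma mk_sub_eq {p q : MvPolynomial (Fin 3) ℚ} (h : p - q ∈ genus2Ideal) :
    Ideal.Quotient.mk genus2Ideal p = Ideal.Quotient.mk genus2Ideal q :=
  Ideal.Quotient.eq.2 h

lemma mkβ : Ideal.Quotient.mk genus2Ideal (X 1) =
    8 - (Ideal.Quotient.mk genus2Ideal (X 0)) ^ 2 := by
  have h : Ideal.Quotient.mk genus2Ideal (X 1) = Ideal.Quotient.mk genus2Ideal (C 8 - X 0 ^ 2) := by
    apply mk_sub_eq
    have : (X 1 - (C 8 - X 0 ^ 2) : MvPolynomial (Fin 3) ℚ) = X 0 ^ 2 + X 1 - C 8 := by ring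
    rw [this]; exact mem1
  rw [h]; simp [map_ofNat]

lemma mkγ : Ideal.Quotient.mk genus2Ideal (X 2) =
    (Ideal.Quotient.mk genus2Ideal (X 0)) ^ 3 - 16 * (Ideal.Quotient.mk genus2Ideal (X 0)) := by
  have h : Ideal.Quotient.mk genus2Ideal (X 2) =
      Ideal.Quotient.mk genus2Ideal (X 0 ^ 3 - C 16 * X 0) := by
    apply mk_sub_eq
    have : (X 2 - (X 0 ^ 3 - C 16 * X 0) : MvPolynomial (Fin 3) ℚ) =
        ((X 1 + C 8) * X 0 + X 2) - X 0 * (X 0 ^ 2 + X 1 - C 8) := by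
      simp only [map_ofNat]; ring
    rw [this]
    exact Ideal.sub_mem _ mem2 (Ideal.mul_mem_left _ _ mem1)
  rw [h]; simp [map_ofNat]

lemma φ_mk (p : MvPolynomial (Fin 3) ℚ) : φ (Ideal.Quotient.mk genus2Ideal p) = φ0 p := rfl

lemma φψ : φ.comp ψ = AlgHom.id ℚ _ := by
  apply AdjoinRoot.algHom_ext
  simp [ψ, φ_mk, ψ_root, ψ_mkX, φ0, ← AdjoinRoot.mk_X, g2root]

lemma ψφ : ψ.comp φ = AlgHom.id ℚ _ := by
  apply Ideal.Quotient.algHom_ext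
  apply MvPolynomial.algHom_ext
  intro i
  fin_cases i <;>
    simp [φ_mk, ψ, φ0, Ideal.Quotient.mkₐ_eq_mk, ψ_root, g2root, mkβ, mkγ, map_ofNat]

noncomputable def g2Equiv : (MvPolynomial (Fin 3) ℚ ⧸ genus2Ideal) ≃ₐ[ℚ] AdjoinRoot g2f :=
  AlgEquiv.ofAlgHom φ ψ φψ ψφ

lemma g2f_ne_zero : g2f ≠ 0 := g2f_monic.ne_zero

noncomputable def g2pb : PowerBasis ℚ (AdjoinRoot g2f) := AdjoinRoot.powerBasis g2f_ne_zero

lemma g2_finrank : Module.finrank ℚ (MvPolynomial (Fin 3) ℚ ⧸ genus2Ideal) = 4 := by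
  rw [g2Equiv.toLinearEquiv.finrank_eq, g2pb.finrank]
  simp [g2pb, AdjoinRoot.powerBasis, g2f_natDegree]

lemma smul_mk (r : ℚ) (p : MvPolynomial (Fin 3) ℚ) :
    r • (Ideal.Quotient.mk genus2Ideal p) = Ideal.Quotient.mk genus2Ideal (C r * p) := by
  rw [← Ideal.Quotient.mkₐ_eq_mk ℚ, ← map_smul, smul_eq_C_mul]

noncomputable abbrev α : MvPolynomial (Fin 3) ℚ ⧸ genus2Ideal := Ideal.Quotient.mk genus2Ideal (X 0)

lemma span_powers : Submodule.span ℚ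
    (Set.range fun i : Fin 4 => α ^ (i : ℕ)) = ⊤ := by
  set el := g2Equiv.symm.toLinearEquiv with hel
  have hdim : g2pb.dim = 4 := by
    simp [g2pb, AdjoinRoot.powerBasis, g2f_natDegree]
  have hgen : g2Equiv.symm g2pb.gen = α := by
    show ψ (AdjoinRoot.root g2f) = α
    simp [ψ, ψ_root]
  have key : ∀ i : Fin g2pb.dim, el (g2pb.basis i) = α ^ (i : ℕ) := by
    intro i
    have h1 : g2pb.basis i = g2pb.gen ^ (i : ℕ) := by
      rw [PowerBasis.coe_basis]
    rw [h1]
    show g2Equiv.symm (g2pb.gen ^ (i : ℕ)) = _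
    rw [map_pow, hgen]
  have hset : (Set.range fun i : Fin 4 => α ^ (i : ℕ)) = Set.range (el ∘ g2pb.basis) := by
    ext x
    simp only [Set.mem_range, Function.comp_apply]
    constructor
    · rintro ⟨i, rfl⟩
      exact ⟨⟨(i : ℕ), by omega⟩, key _⟩
    · rintro ⟨i, rfl⟩
      exact ⟨⟨(i : ℕ), by omega⟩, (key i).symm⟩
  rw [hset, Set.range_comp, Submodule.span_image_linearEquiv, g2pb.basis.span_eq, Submodule.map_top]
  exact LinearMap.range_eq_top.2 el.surjective

lemma span_set : Submodule.span ℚ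
    ({1, α, Ideal.Quotient.mk genus2Ideal (X 1), Ideal.Quotient.mk genus2Ideal (X 2)} :
      Set (MvPolynomial (Fin 3) ℚ ⧸ genus2Ideal)) = ⊤ := by
  set S : Set (MvPolynomial (Fin 3) ℚ ⧸ genus2Ideal) :=
    {1, α, Ideal.Quotient.mk genus2Ideal (X 1), Ideal.Quotient.mk genus2Ideal (X 2)} with hS
  have h1 : (1 : MvPolynomial (Fin 3) ℚ ⧸ genus2Ideal) ∈ Submodule.span ℚ S :=
    Submodule.subset_span (by simp [hS])
  have hα : α ∈ Submodule.span ℚ S := Submodule.subset_span (by simp [hS])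
  have hβ : Ideal.Quotient.mk genus2Ideal (X 1) ∈ Submodule.span ℚ S :=
    Submodule.subset_span (by simp [hS])
  have hγ : Ideal.Quotient.mk genus2Ideal (X 2) ∈ Submodule.span ℚ S :=
    Submodule.subset_span (by simp [hS])
  have h8 : ((8 : ℚ) • (1 : MvPolynomial (Fin 3) ℚ ⧸ genus2Ideal)) = 8 := by
    rw [show (1 : MvPolynomial (Fin 3) ℚ ⧸ genus2Ideal) = Ideal.Quotient.mk genus2Ideal 1 from
      rfl, smul_mk]
    simp [map_ofNat]
  have h16 : ((16 : ℚ) • α) = 16 * α := by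
    rw [smul_mk]
    simp [map_ofNat]
  have hα2 : α ^ 2 ∈ Submodule.span ℚ S := by
    have h : α ^ 2 = (8 : ℚ) • (1 : MvPolynomial (Fin 3) ℚ ⧸ genus2Ideal) -
        Ideal.Quotient.mk genus2Ideal (X 1) := by
      rw [h8, mkβ]; ring
    rw [h]
    exact Submodule.sub_mem _ (Submodule.smul_mem _ _ h1) hβ
  have hα3 : α ^ 3 ∈ Submodule.span ℚ S := by
    have h : α ^ 3 = Ideal.Quotient.mk genus2Ideal (X 2) + (16 : ℚ) • α := by
      rw [h16, mkγ]; ring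
    rw [h]
    exact Submodule.add_mem _ hγ (Submodule.smul_mem _ _ hα)
  rw [← top_le_iff, ← span_powers, Submodule.span_le]
  rintro x ⟨i, rfl⟩
  fin_cases i <;> simpa using ‹_›


/-- For `g = 2`, the ring `ℚ[α,β,γ]/(α² + β − 8, (β + 8)α + γ, αγ)` is a
`ℚ`-vector space of dimension 4, with basis the images of `1, α, β, γ`. -/
theorem stmt_16 :
    Module.finrank ℚ (MvPolynomial (Fin 3) ℚ ⧸ genus2Ideal) = 4 ∧
    LinearIndependent ℚ
      ![(1 : MvPolynomial (Fin 3) ℚ ⧸ genus2Ideal),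
        Ideal.Quotient.mk genus2Ideal (X 0),
        Ideal.Quotient.mk genus2Ideal (X 1),
        Ideal.Quotient.mk genus2Ideal (X 2)] ∧
    Submodule.span ℚ
      ({(1 : MvPolynomial (Fin 3) ℚ ⧸ genus2Ideal),
        Ideal.Quotient.mk genus2Ideal (X 0),
        Ideal.Quotient.mk genus2Ideal (X 1),
        Ideal.Quotient.mk genus2Ideal (X 2)} :
        Set (MvPolynomial (Fin 3) ℚ ⧸ genus2Ideal)) = ⊤ := by
  refine ⟨g2_finrank, ?_, span_set⟩
  have hrange : ({1, α, Ideal.Quotient.mk genus2Ideal (X 1), Ideal.Quotient.mk genus2Ideal (X 2)} :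
      Set (MvPolynomial (Fin 3) ℚ ⧸ genus2Ideal)) ⊆
      Set.range ![(1 : MvPolynomial (Fin 3) ℚ ⧸ genus2Ideal), Ideal.Quotient.mk genus2Ideal (X 0),
        Ideal.Quotient.mk genus2Ideal (X 1), Ideal.Quotient.mk genus2Ideal (X 2)] := by
    intro x hx
    simp only [Set.mem_insert_iff, Set.mem_singleton_iff] at hx
    rcases hx with rfl | rfl | rfl | rfl
    exacts [⟨0, rfl⟩, ⟨1, rfl⟩, ⟨2, rfl⟩, ⟨3, rfl⟩]
  refine linearIndependent_of_top_le_span_of_card_eq_finrank ?_ ?_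
  · rw [← span_set]
    exact Submodule.span_mono hrange
  · rw [Fintype.card_fin, g2_finrank]
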